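/- Let μ > 0 and t ∈ ℝ, and set λ = μ²/4. Let y : ℝ → ℝ be twice differentiable and nonvanishing with y''(u) = y(u)^{−3} + λ·y(u) for all u ∈ ℝ. For z ∈ ℝ with 1 + t·e^{μz} > 0, define u(z) = −(1/μ)·ln(e^{−μz} + t) and ỹ(z) = (1 + t·e^{μz})^{1/2}·y(u(z)). Then on the open set {z : 1 + t·e^{μz} > 0}, ỹ is twice differentiable, nonvanishing, and satisfies ỹ''(z) = ỹ(z)^{−3} + λ·ỹ(z). (This is the one-parameter symmetry group generated by V = (e^{2√λ x}/(2√λ))∂ₓ + (e^{2√λ x}·y/2)∂_y of the equation y'' = y^{−3} + λy with A = 0, one of the three independent symmetries exhibiting the three-dimensional symmetry algebra of this equation.) -/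

import Mathlib

/-- One-parameter symmetry of `y'' = y⁻³ + λy` with
`λ = μ²/4 > 0`: if `y` is a twice differentiable nonvanishing global
solution, then for `u(z) = -(1/μ)·ln(e^{-μz} + t)` and
`ỹ(z) = (1 + t·e^{μz})^{1/2}·y(u(z))`, on the open set
`{z : 1 + t·e^{μz} > 0}` the function `ỹ` is twice differentiable,
nonvanishing, and satisfies `ỹ'' = ỹ⁻³ + λỹ`. -/
theorem stmt19 (μ t : ℝ) (hμ : 0 < μ) (lam : ℝ) (hlam : lam = μ ^ 2 / 4)
    (y : ℝ → ℝ) (hy : Differentiable ℝ y) (hy' : Differentiable ℝ (deriv y))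
    (hynz : ∀ u : ℝ, y u ≠ 0)
    (hode : ∀ u : ℝ, deriv (deriv y) u = (y u) ^ (-3 : ℤ) + lam * y u)
    (u Y : ℝ → ℝ)
    (hu : ∀ z : ℝ, u z = -(1 / μ) * Real.log (Real.exp (-(μ * z)) + t))
    (hY : ∀ z : ℝ, Y z = Real.sqrt (1 + t * Real.exp (μ * z)) * y (u z)) :
    ∀ z : ℝ, 0 < 1 + t * Real.exp (μ * z) →
      DifferentiableAt ℝ Y z ∧ DifferentiableAt ℝ (deriv Y) z ∧ Y z ≠ 0 ∧
      deriv (deriv Y) z = (Y z) ^ (-3 : ℤ) + lam * Y z := by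
  have hμ0 : μ ≠ 0 := ne_of_gt hμ
  set s : ℝ → ℝ := fun z => 1 + t * Real.exp (μ * z) with hs
  have hμz : ∀ z : ℝ, HasDerivAt (fun w : ℝ => μ * w) μ z := by
    intro z; simpa using (hasDerivAt_id z).const_mul μ
  have hsd : ∀ z : ℝ, HasDerivAt s (μ * (s z - 1)) z := by
    intro z
    have h1 : HasDerivAt (fun w : ℝ => Real.exp (μ * w)) (Real.exp (μ * z) * μ) z :=
      (hμz z).exp
    have h2 := (h1.const_mul t).const_add 1
    rw [hs]
    refine h2.congr_deriv ?_
    simp only [hs]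
    ring
  have hkey : ∀ w : ℝ, Real.exp (-(μ * w)) + t = Real.exp (-(μ * w)) * s w := by
    intro w
    simp only [hs, Real.exp_neg]
    have hx : Real.exp (μ * w) ≠ 0 := (Real.exp_pos _).ne'
    field_simp
  have hu' : ∀ z : ℝ, 0 < s z → HasDerivAt u (s z)⁻¹ z := by
    intro z hz
    have hinner : HasDerivAt (fun w : ℝ => Real.exp (-(μ * w)) + t)
        (Real.exp (-(μ * z)) * -μ) z := ((hμz z).neg.exp).add_const t
    have hpos : 0 < Real.exp (-(μ * z)) + t := by
      rw [hkey z]; exact mul_pos (Real.exp_pos _) hz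
    have hlog := (Real.hasDerivAt_log hpos.ne').comp z hinner
    have hfin := hlog.const_mul (-(1 / μ))
    have hueq : u = fun w => -(1 / μ) * Real.log (Real.exp (-(μ * w)) + t) :=
      funext hu
    rw [hueq]
    refine hfin.congr_deriv ?_
    rw [hkey z]
    have hx : Real.exp (-(μ * z)) ≠ 0 := (Real.exp_pos _).ne'
    have hsz : s z ≠ 0 := hz.ne'
    field_simp
  have hsqrt : ∀ z : ℝ, 0 < s z →
      HasDerivAt (fun w => Real.sqrt (s w)) (μ * (s z - 1) / (2 * Real.sqrt (s z))) z := by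
    intro z hz
    have := (Real.hasDerivAt_sqrt hz.ne').comp z (hsd z)
    refine this.congr_deriv ?_
    rw [one_div]
    ring
  set G : ℝ → ℝ := fun w =>
      μ * (s w - 1) / (2 * Real.sqrt (s w)) * y (u w)
      + Real.sqrt (s w) * (deriv y (u w) * (s w)⁻¹) with hG
  have hYG : ∀ z : ℝ, 0 < s z → HasDerivAt Y (G z) z := by
    intro z hz
    have hyu : HasDerivAt (fun w => y (u w)) (deriv y (u z) * (s z)⁻¹) z :=
      (hy (u z)).hasDerivAt.comp z (hu' z hz)
    have hm := (hsqrt z hz).mul hyu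
    have hYeq : Y = fun w => Real.sqrt (s w) * y (u w) := by
      funext w
      rw [hY w]
    rw [hYeq, hG]
    exact hm
  intro z hz0
  have hz : 0 < s z := by simp only [hs]; exact hz0
  have hsz : s z ≠ 0 := hz.ne'
  have hcpos : 0 < Real.sqrt (s z) := Real.sqrt_pos.mpr hz
  have hcne : Real.sqrt (s z) ≠ 0 := hcpos.ne'
  -- second derivative of Y
  have hnum : HasDerivAt (fun w => μ * (s w - 1)) (μ * (μ * (s z - 1))) z :=
    ((hsd z).sub_const 1).const_mul μ
  have hden : HasDerivAt (fun w => 2 * Real.sqrt (s w))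
      (2 * (μ * (s z - 1) / (2 * Real.sqrt (s z)))) z := (hsqrt z hz).const_mul 2
  have hdenne : (2 : ℝ) * Real.sqrt (s z) ≠ 0 := mul_ne_zero two_ne_zero hcne
  have hA := hnum.div hden hdenne
  have hyu : HasDerivAt (fun w => y (u w)) (deriv y (u z) * (s z)⁻¹) z :=
    (hy (u z)).hasDerivAt.comp z (hu' z hz)
  have hy1u : HasDerivAt (fun w => deriv y (u w)) (deriv (deriv y) (u z) * (s z)⁻¹) z :=
    (hy' (u z)).hasDerivAt.comp z (hu' z hz)
  have hsinv : HasDerivAt (fun w => (s w)⁻¹) (-(μ * (s z - 1)) / (s z) ^ 2) z :=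
    (hsd z).inv hsz
  have hGd := (hA.mul hyu).add ((hsqrt z hz).mul (hy1u.mul hsinv))
  have hGd' : HasDerivAt G
      ((μ * (μ * (s z - 1)) * (2 * Real.sqrt (s z)) -
          μ * (s z - 1) * (2 * (μ * (s z - 1) / (2 * Real.sqrt (s z))))) /
          (2 * Real.sqrt (s z)) ^ 2 * y (u z) +
        μ * (s z - 1) / (2 * Real.sqrt (s z)) * (deriv y (u z) * (s z)⁻¹) +
        (μ * (s z - 1) / (2 * Real.sqrt (s z)) * (deriv y (u z) * (s z)⁻¹) +
          Real.sqrt (s z) *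
            (deriv (deriv y) (u z) * (s z)⁻¹ * (s z)⁻¹ +
              deriv y (u z) * (-(μ * (s z - 1)) / (s z) ^ 2)))) z := by
    rw [hG]
    exact hGd
  -- eventual equality of deriv Y and G
  have hcont : Continuous s := by
    rw [hs]
    exact continuous_const.add (continuous_const.mul
      (Real.continuous_exp.comp (continuous_const.mul continuous_id)))
  have hopen : IsOpen {w : ℝ | 0 < s w} := isOpen_lt continuous_const hcont
  have hev : deriv Y =ᶠ[nhds z] G := by
    filter_upwards [hopen.mem_nhds hz] with w hw
    exact (hYG w hw).deriv
  have hdY := hGd'.congr_of_eventuallyEq hev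
  refine ⟨(hYG z hz).differentiableAt, hdY.differentiableAt, ?_, ?_⟩
  · rw [hY z]
    exact mul_ne_zero (Real.sqrt_pos.mpr hz0).ne' (hynz _)
  · rw [hdY.deriv, hY z, hode (u z)]
    have hsq : Real.sqrt (s z) ^ 2 = s z := Real.sq_sqrt hz.le
    have hsz' : (1 : ℝ) + t * Real.exp (μ * z) = s z := by simp only [hs]
    rw [hsz']
    set c : ℝ := Real.sqrt (s z) with hc
    set y0 : ℝ := y (u z) with hy0
    set y1 : ℝ := deriv y (u z) with hy1
    have hy0ne : y0 ≠ 0 := hynz _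
    rw [← hsq]
    have hz3 : ∀ x : ℝ, x ≠ 0 → x ^ (-3 : ℤ) = (x ^ 3)⁻¹ := by
      intro x hx
      rw [zpow_neg]
      norm_cast
    rw [hz3 y0 hy0ne, hz3 (c * y0) (mul_ne_zero hcne hy0ne), hlam]
    field_simp
    ring
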